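/- If a pattern p is k-avoidable in the ordinary sense, then p is 3k-avoidable up to ≃; consequently λ_≃(p) ≤ 3·λ_=(p) for every avoidable pattern p. -/
import Mathlib

/-- `x` is a (finite, contiguous) factor of the infinite word `w`. -/
def InfFactor {A : Type*} (x : List A) (w : ℕ → A) : Prop :=
  ∃ i : ℕ, x = (List.range x.length).map fun j => w (i + j)

/-- Reversal-equivalence of words: `x ≃ x'` iff `x' = x` or `x'` is the reversal of `x`. -/
def SimRev {A : Type*} (x x' : List A) : Prop := x' = x ∨ x' = x.reverse

/-- The infinite word `w` encounters the pattern `p` up to the relation `sim`: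
`w` has a factor `X₁X₂⋯Xₙ` with each `Xᵢ` nonempty and `sim Xᵢ Xⱼ` whenever `pᵢ = pⱼ`. -/
def Encounters {V A : Type*} (sim : List A → List A → Prop) (p : List V) (w : ℕ → A) : Prop :=
  ∃ X : List (List A), X.length = p.length ∧ (∀ x ∈ X, x ≠ []) ∧
    InfFactor X.flatten w ∧
    ∀ i j : ℕ, i < p.length → j < p.length → p[i]? = p[j]? →
      sim (X.getD i []) (X.getD j [])

lemma inffactor_iff {A : Type*} (x : List A) (w : ℕ → A) :
    InfFactor x w ↔ ∃ i, ∀ j (hj : j < x.length), x[j] = w (i + j) := by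
  constructor
  · rintro ⟨i, hi⟩
    refine ⟨i, fun j hj => ?_⟩
    rw [List.getElem_of_eq hi]
    simp
  · rintro ⟨i, hi⟩
    refine ⟨i, ?_⟩
    apply List.ext_getElem (by simp)
    intro j h1 h2
    simpa using hi j h1

lemma inffactor_map {A B : Type*} (f : A → B) {x : List A} {w : ℕ → A}
    (h : InfFactor x w) : InfFactor (x.map f) (fun n => f (w n)) := by
  rw [inffactor_iff] at h ⊢
  obtain ⟨i, hi⟩ := h
  refine ⟨i, fun j hj => ?_⟩
  simp only [List.length_map] at hj
  simp [hi j hj]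

lemma inffactor_of_append {A : Type*} {u x v : List A} {w : ℕ → A}
    (h : InfFactor (u ++ (x ++ v)) w) : InfFactor x w := by
  rw [inffactor_iff] at h ⊢
  obtain ⟨i, hi⟩ := h
  refine ⟨i + u.length, fun j hj => ?_⟩
  have hlt : u.length + j < (u ++ (x ++ v)).length := by simp; omega
  have := hi (u.length + j) hlt
  rw [List.getElem_append_right (by omega)] at this
  simp only [Nat.add_sub_cancel_left] at this
  rw [List.getElem_append_left hj] at this
  rw [this]; ring_nf

lemma inffactor_flatten_elem {A : Type*} {X : List (List A)} {w : ℕ → A}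
    (h : InfFactor X.flatten w) {m : ℕ} (hm : m < X.length) : InfFactor X[m] w := by
  have hX : X = X.take m ++ (X[m] :: X.drop (m + 1)) := by
    rw [List.getElem_cons_drop, List.take_append_drop]
  rw [hX, List.flatten_append, List.flatten_cons] at h
  exact inffactor_of_append h

lemma rev_factor_short {A : Type*} {w : ℕ → A} {f : A → ℕ}
    (hf : ∀ m, f (w m) = m % 3) {x : List A}
    (h1 : InfFactor x w) (h2 : InfFactor x.reverse w) : x.length ≤ 1 := by
  by_contra hlen
  push_neg at hlen
  obtain ⟨a, ha⟩ := (inffactor_iff x w).mp h1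
  obtain ⟨b, hb⟩ := (inffactor_iff x.reverse w).mp h2
  have e0 : x[x.length - 1]'(by omega) = w b := by
    have := hb 0 (by simp; omega)
    rwa [List.getElem_reverse] at this
  have e1 : x[x.length - 1 - 1]'(by omega) = w (b + 1) := by
    have := hb 1 (by simp; omega)
    rwa [List.getElem_reverse] at this
  have f0 : w (a + (x.length - 1)) = w b := by rw [← ha (x.length - 1) (by omega)]; exact e0
  have f1 : w (a + (x.length - 1 - 1)) = w (b + 1) := by
    rw [← ha (x.length - 1 - 1) (by omega)]; exact e1
  have g0 := congrArg f f0
  have g1 := congrArg f f1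
  rw [hf, hf] at g0 g1
  omega

theorem three_k_avoidable_upto_rev {V : Type*} (p : List V) (hp : p ≠ []) :
    (∀ k : ℕ, (∃ w : ℕ → Fin k, ¬ Encounters Eq p w) →
      ∃ w : ℕ → Fin (3 * k), ¬ Encounters SimRev p w) ∧
    ((∃ k : ℕ, ∃ w : ℕ → Fin k, ¬ Encounters Eq p w) →
      sInf {k : ℕ | ∃ w : ℕ → Fin k, ¬ Encounters SimRev p w} ≤
        3 * sInf {k : ℕ | ∃ w : ℕ → Fin k, ¬ Encounters Eq p w}) := by
  have main : ∀ k : ℕ, (∃ w : ℕ → Fin k, ¬ Encounters Eq p w) →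
      ∃ w : ℕ → Fin (3 * k), ¬ Encounters SimRev p w := by
    rintro k ⟨w, hw⟩
    rcases Nat.eq_zero_or_pos k with rfl | hkpos
    · exact (w 0).elim0
    set w' : ℕ → Fin (3 * k) :=
      fun i => ⟨3 * (w i).val + i % 3, by have := (w i).isLt; omega⟩ with hw'def
    set π : Fin (3 * k) → Fin k := fun a => ⟨a.val / 3, by have := a.isLt; omega⟩ with hπ
    have hval : ∀ m, (w' m).val % 3 = m % 3 := by
      intro m; simp only [hw'def]; omega
    have hproj : (fun n => π (w' n)) = w := by
      funext n; apply Fin.ext; simp only [hπ, hw'def]; omega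
    refine ⟨w', fun henc => hw ?_⟩
    obtain ⟨X, hlen, hne, hfac, hsim⟩ := henc
    have hfactor : ∀ m (hm : m < X.length), InfFactor X[m] w' :=
      fun m hm => inffactor_flatten_elem hfac hm
    have key : ∀ i j : ℕ, i < p.length → j < p.length → p[i]? = p[j]? →
        X.getD i [] = X.getD j [] := by
      intro i j hi hj hpij
      have hi' : i < X.length := hlen ▸ hi
      have hj' : j < X.length := hlen ▸ hj
      rw [List.getD_eq_getElem X [] hi', List.getD_eq_getElem X [] hj']
      rcases hsim i j hi hj hpij with h | h
      · rw [List.getD_eq_getElem X [] hi', List.getD_eq_getElem X [] hj'] at h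
        exact h.symm
      · rw [List.getD_eq_getElem X [] hi', List.getD_eq_getElem X [] hj'] at h
        have hshort : X[i].length ≤ 1 :=
          rev_factor_short (f := fun a => a.val % 3) hval (hfactor i hi') (h ▸ hfactor j hj')
        have hne' : X[i] ≠ [] := hne _ (List.getElem_mem hi')
        have hlen1 : X[i].length = 1 := by
          have : X[i].length ≠ 0 := by simpa [List.length_eq_zero_iff] using hne'
          omega
        obtain ⟨a, ha⟩ := List.length_eq_one_iff.mp hlen1
        rw [h, ha, List.reverse_singleton]
    refine ⟨X.map (List.map π), by simpa using hlen, ?_, ?_, ?_⟩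
    · intro x hx
      simp only [List.mem_map] at hx
      obtain ⟨y, hy, rfl⟩ := hx
      simpa using hne y hy
    · have := inffactor_map π hfac
      rw [hproj] at this
      rwa [List.map_flatten] at this
    · intro i j hi hj hpij
      have hk := key i j hi hj hpij
      have hi' : i < X.length := hlen ▸ hi
      have hj' : j < X.length := hlen ▸ hj
      rw [List.getD_eq_getElem _ [] (by simpa using hi'),
        List.getD_eq_getElem _ [] (by simpa using hj')]
      rw [List.getD_eq_getElem X [] hi', List.getD_eq_getElem X [] hj'] at hk
      simp only [List.getElem_map]
      rw [hk]
  refine ⟨main, ?_⟩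
  rintro ⟨k, hk⟩
  have hnonempty : {k : ℕ | ∃ w : ℕ → Fin k, ¬ Encounters Eq p w}.Nonempty := ⟨k, hk⟩
  exact Nat.sInf_le (main _ (Nat.sInf_mem hnonempty))
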